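/- Suppose d = gcd(n,m) = 1. Then depth(S/J_{n,m}^t) = 0 for all integers t ≥ t_0; equivalently, the maximal graded ideal (x_1,…,x_n) is an associated prime of S/J_{n,m}^t for all t ≥ t_0. -/

import Mathlib

open MvPolynomial

/-- The `m`-path ideal of the cycle graph of length `n`, as an ideal of
`S = K[x_0, …, x_{n-1}]` (variables indexed by `ZMod n`): it is generated by the
`n` monomials `x_i x_{i+1} ⋯ x_{i+m-1}`, indices taken modulo `n`. -/
noncomputable def cyclePathIdeal (K : Type*) [Field K] (n m : ℕ) :
    Ideal (MvPolynomial (ZMod n) K) :=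
  Ideal.span { p | ∃ i : ZMod n, p = ∏ j ∈ Finset.range m, X (i + (j : ZMod n)) }

/-- The maximal graded ideal `(x_0, …, x_{n-1})` of `K[x_i : i ∈ σ]`. -/
noncomputable def maxIdeal (K : Type*) [Field K] (σ : Type*) :
    Ideal (MvPolynomial σ K) :=
  Ideal.span (Set.range (X : σ → MvPolynomial σ K))

/-- The depth of `S/I` with respect to the maximal graded ideal `(x_0, …, x_{n-1})`:
the maximal length of an `S/I`-regular sequence of elements of the maximal graded ideal. -/
noncomputable def quotDepth {K : Type*} [Field K] {σ : Type*}
    (I : Ideal (MvPolynomial σ K)) : ℕ :=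
  sSup { k : ℕ | ∃ rs : List (MvPolynomial σ K), rs.length = k ∧
    (∀ r ∈ rs, r ∈ maxIdeal K σ) ∧
    RingTheory.Sequence.IsRegular (MvPolynomial σ K ⧸ I) rs }

section Aux

variable {K : Type*} [Field K]

/-- A product of variables, written as a single monomial. -/
lemma CycleAux.prod_X_eq_monomial {σ ι : Type*} (s : Finset ι) (f : ι → σ) :
    (∏ j ∈ s, (X (f j) : MvPolynomial σ K)) =
      monomial (∑ j ∈ s, Finsupp.single (f j) 1) 1 := by
  classical
  induction s using Finset.induction with
  | empty => simp
  | insert _ _ h ih =>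
      rw [Finset.prod_insert h, Finset.sum_insert h, ih,
        show (X (f _) : MvPolynomial σ K) = monomial (Finsupp.single (f _) 1) 1 by
          rw [← X_pow_eq_monomial, pow_one],
        monomial_mul, one_mul]

/-- A product of monomials with coefficient one. -/
lemma CycleAux.prod_monomial_one {σ ι : Type*} (s : Finset ι) (d : ι → (σ →₀ ℕ)) :
    (∏ j ∈ s, (monomial (d j) 1 : MvPolynomial σ K)) = monomial (∑ j ∈ s, d j) 1 := by
  classical
  induction s using Finset.induction with
  | empty => simp
  | insert _ _ h ih => rw [Finset.prod_insert h, Finset.sum_insert h, ih, monomial_mul, one_mul]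

/-- A product of elements of an ideal lies in the corresponding power. -/
lemma CycleAux.prod_mem_pow {R : Type*} [CommRing R] {ι : Type*} (s : Finset ι)
    (f : ι → R) (I : Ideal R) (h : ∀ k ∈ s, f k ∈ I) : ∏ k ∈ s, f k ∈ I ^ s.card := by
  classical
  induction s using Finset.induction with
  | empty => simp
  | @insert a s hnot ih =>
      rw [Finset.prod_insert hnot, Finset.card_insert_of_notMem hnot, pow_succ']
      exact Ideal.mul_mem_mul (h a (Finset.mem_insert_self a s))
        (ih fun k hk => h k (Finset.mem_insert_of_mem hk))

/-- Summing a block-indexed family. -/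
lemma CycleAux.sum_blocks {M : Type*} [AddCommMonoid M] (F : ℕ → M) (N m : ℕ) :
    ∑ k ∈ Finset.range N, ∑ r ∈ Finset.range m, F (k * m + r)
      = ∑ l ∈ Finset.range (N * m), F l := by
  induction N with
  | zero => simp
  | succ N ih =>
      rw [Finset.sum_range_succ, ih, Nat.succ_mul, Finset.sum_range_add]

lemma CycleAux.sum_single_range_n (n : ℕ) [NeZero n] (i : ZMod n) :
    ∑ r ∈ Finset.range n, Finsupp.single (i + (r : ZMod n)) (1 : ℕ)
      = ∑ a : ZMod n, Finsupp.single a 1 := by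
  refine Finset.sum_nbij' (fun r => i + (r : ZMod n)) (fun a => (a - i).val) ?_ ?_ ?_ ?_ ?_
  · intro a _; exact Finset.mem_univ _
  · intro a _; exact Finset.mem_range.mpr (ZMod.val_lt _)
  · intro r hr
    simp only [add_sub_cancel_left]
    exact ZMod.val_natCast_of_lt (Finset.mem_range.mp hr)
  · intro a _
    simp [ZMod.natCast_val, ZMod.cast_id]
  · intro r _; rfl

/-- The exponent vector of a path generator starting at `i`. -/
noncomputable def CycleAux.cExp (n m : ℕ) (i : ZMod n) : (ZMod n) →₀ ℕ :=
  ∑ j ∈ Finset.range m, Finsupp.single (i + (j : ZMod n)) 1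

lemma CycleAux.key (n m α t0 : ℕ) [NeZero n] (ht0 : m * t0 = α * n + 1) (i : ZMod n) :
    ∑ k ∈ Finset.range t0, CycleAux.cExp n m (i + ((k * m : ℕ) : ZMod n))
      = Finsupp.single i 1 + α • ∑ a : ZMod n, Finsupp.single a 1 := by
  have hstep : ∀ k ∈ Finset.range t0, CycleAux.cExp n m (i + ((k * m : ℕ) : ZMod n))
      = ∑ r ∈ Finset.range m, Finsupp.single (i + ((k * m + r : ℕ) : ZMod n)) 1 := by
    intro k _
    unfold CycleAux.cExp
    refine Finset.sum_congr rfl fun r _ => ?_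
    congr 1
    push_cast
    ring
  rw [Finset.sum_congr rfl hstep, CycleAux.sum_blocks (fun l => Finsupp.single (i + (l : ZMod n)) 1) t0 m]
  have hmc : t0 * m = α * n + 1 := by rw [mul_comm]; exact ht0
  rw [hmc]
  have hbase : ∀ β : ℕ, ∑ l ∈ Finset.range (β * n), Finsupp.single (i + (l : ZMod n)) (1 : ℕ)
      = β • ∑ a : ZMod n, Finsupp.single a 1 := by
    intro β
    induction β with
    | zero => simp
    | succ β ih =>
        rw [Nat.succ_mul, Finset.sum_range_add, ih, succ_nsmul]
        congr 1
        rw [← CycleAux.sum_single_range_n n i]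
        refine Finset.sum_congr rfl fun r _ => ?_
        congr 1
        push_cast
        simp [ZMod.natCast_self]
  rw [Finset.sum_range_add, hbase α]
  simp [ZMod.natCast_self, add_comm]

/-- The total degree of an exponent vector. -/
noncomputable def CycleAux.wt (n : ℕ) [NeZero n] (d : (ZMod n) →₀ ℕ) : ℕ :=
  ∑ a : ZMod n, d a

lemma CycleAux.wt_single (n : ℕ) [NeZero n] (b : ZMod n) :
    CycleAux.wt n (Finsupp.single b 1) = 1 := by
  unfold CycleAux.wt
  simp [Finsupp.single_apply]

lemma CycleAux.wt_add (n : ℕ) [NeZero n] (d e : (ZMod n) →₀ ℕ) :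
    CycleAux.wt n (d + e) = CycleAux.wt n d + CycleAux.wt n e := by
  unfold CycleAux.wt
  simp [Finset.sum_add_distrib]

lemma CycleAux.wt_sum (n : ℕ) [NeZero n] {ι : Type*} (s : Finset ι) (d : ι → (ZMod n) →₀ ℕ) :
    CycleAux.wt n (∑ j ∈ s, d j) = ∑ j ∈ s, CycleAux.wt n (d j) := by
  unfold CycleAux.wt
  rw [Finset.sum_comm]
  refine Finset.sum_congr rfl fun a _ => ?_
  simp [Finsupp.finset_sum_apply]

lemma CycleAux.wt_smul (n : ℕ) [NeZero n] (k : ℕ) (d : (ZMod n) →₀ ℕ) :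
    CycleAux.wt n (k • d) = k * CycleAux.wt n d := by
  unfold CycleAux.wt
  simp [Finset.mul_sum]

lemma CycleAux.wt_cExp (n m : ℕ) [NeZero n] (i : ZMod n) :
    CycleAux.wt n (CycleAux.cExp n m i) = m := by
  unfold CycleAux.cExp
  rw [CycleAux.wt_sum]
  simp [CycleAux.wt_single]

lemma CycleAux.wt_T (n : ℕ) [NeZero n] :
    CycleAux.wt n (∑ a : ZMod n, Finsupp.single a 1) = n := by
  rw [CycleAux.wt_sum]
  simp [CycleAux.wt_single, ZMod.card]

/-- The ideal of polynomials supported in degrees `≥ k`. -/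
noncomputable def CycleAux.lowDeg (K : Type*) [Field K] (n : ℕ) [NeZero n] (k : ℕ) :
    Ideal (MvPolynomial (ZMod n) K) :=
  Ideal.span ((fun d => monomial d (1 : K)) '' {d | k ≤ CycleAux.wt n d})

lemma CycleAux.lowDeg_mul_le (n : ℕ) [NeZero n] (a b : ℕ) :
    CycleAux.lowDeg K n a * CycleAux.lowDeg K n b ≤ CycleAux.lowDeg K n (a + b) := by
  unfold CycleAux.lowDeg
  rw [Ideal.span_mul_span']
  refine Ideal.span_le.mpr ?_
  rw [Set.mul_subset_iff]
  rintro _ ⟨d, hd, rfl⟩ _ ⟨e, he, rfl⟩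
  rw [monomial_mul, one_mul]
  refine Ideal.subset_span ⟨d + e, ?_, rfl⟩
  rw [Set.mem_setOf_eq, CycleAux.wt_add]
  exact add_le_add hd he

lemma CycleAux.cycle_le_lowDeg (n m : ℕ) [NeZero n] :
    cyclePathIdeal K n m ≤ CycleAux.lowDeg K n m := by
  unfold cyclePathIdeal
  refine Ideal.span_le.mpr ?_
  rintro _ ⟨i, rfl⟩
  rw [CycleAux.prod_X_eq_monomial]
  exact Ideal.subset_span ⟨CycleAux.cExp n m i, le_of_eq (CycleAux.wt_cExp n m i).symm, rfl⟩

lemma CycleAux.pow_le_lowDeg (n m : ℕ) [NeZero n] (t : ℕ) (htpos : 0 < t) :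
    (cyclePathIdeal K n m) ^ t ≤ CycleAux.lowDeg K n (m * t) := by
  obtain ⟨s, rfl⟩ := Nat.exists_eq_add_of_lt htpos
  clear htpos
  rw [zero_add]
  induction s with
  | zero => simpa using CycleAux.cycle_le_lowDeg n m
  | succ s ih =>
      have : (cyclePathIdeal K n m) ^ (s + 1 + 1)
          = (cyclePathIdeal K n m) ^ (s + 1) * cyclePathIdeal K n m := by ring
      rw [this]
      calc (cyclePathIdeal K n m) ^ (s + 1) * cyclePathIdeal K n m
          ≤ CycleAux.lowDeg K n (m * (s + 1)) * CycleAux.lowDeg K n m :=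
            Ideal.mul_mono ih (CycleAux.cycle_le_lowDeg n m)
        _ ≤ CycleAux.lowDeg K n (m * (s + 1) + m) := CycleAux.lowDeg_mul_le n _ _
        _ = CycleAux.lowDeg K n (m * (s + 1 + 1)) := by ring_nf

lemma CycleAux.monomial_not_mem_lowDeg (n : ℕ) [NeZero n] (k : ℕ) (D : (ZMod n) →₀ ℕ)
    (hD : CycleAux.wt n D < k) : (monomial D (1 : K)) ∉ CycleAux.lowDeg K n k := by
  classical
  intro hmem
  unfold CycleAux.lowDeg at hmem
  rw [mem_ideal_span_monomial_image] at hmem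
  have hDsupp : D ∈ (monomial D (1 : K)).support := by
    rw [support_monomial, if_neg one_ne_zero]
    exact Finset.mem_singleton_self D
  obtain ⟨d, hd, hle⟩ := hmem D hDsupp
  have hk : k ≤ CycleAux.wt n d := hd
  have : CycleAux.wt n d ≤ CycleAux.wt n D := by
    unfold CycleAux.wt
    exact Finset.sum_le_sum fun a _ => hle a
  omega

lemma CycleAux.maxIdeal_isMaximal (σ : Type*) : (maxIdeal K σ).IsMaximal := by
  classical
  have hker : maxIdeal K σ = RingHom.ker (constantCoeff : MvPolynomial σ K →+* K) := by
    ext p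
    unfold maxIdeal
    rw [← Set.image_univ, mem_ideal_span_X_image, RingHom.mem_ker]
    constructor
    · intro h
      by_contra hc
      have h0 : (0 : σ →₀ ℕ) ∈ p.support := by
        rw [mem_support_iff]
        simpa [constantCoeff_eq] using hc
      obtain ⟨i, _, hi⟩ := h 0 h0
      simp at hi
    · intro h d hd
      by_contra hc
      push_neg at hc
      have hd0 : d = 0 := by
        ext a
        simpa using hc a (Set.mem_univ a)
      rw [hd0, mem_support_iff] at hd
      exact hd (by simpa [constantCoeff_eq] using h)
  rw [hker]
  exact RingHom.ker_isMaximal_of_surjective _ fun k => ⟨C k, by simp⟩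

end Aux

/-- If `d = gcd(n,m) = 1` then `depth(S/J_{n,m}^t) = 0` for all `t ≥ t₀`; equivalently,
the maximal graded ideal is an associated prime of `S/J_{n,m}^t` for all `t ≥ t₀`. -/
theorem depth_eq_zero_of_gcd_eq_one
    (K : Type*) [Field K] (n m : ℕ) (hm : 2 ≤ m) (hmn : m < n)
    (hd : Nat.gcd n m = 1) (t0 α : ℕ) (hα : 0 < α) (ht0le : t0 ≤ n - 1)
    (ht0 : m * t0 = α * n + Nat.gcd n m)
    (ht0max : ∀ s : ℕ, s ≤ n - 1 → (∃ β : ℕ, 0 < β ∧ m * s = β * n + Nat.gcd n m) → s ≤ t0)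
    (t : ℕ) (ht : t0 ≤ t) :
    quotDepth ((cyclePathIdeal K n m) ^ t) = 0 ∧
    maxIdeal K (ZMod n) ∈ associatedPrimes (MvPolynomial (ZMod n) K)
      (MvPolynomial (ZMod n) K ⧸ (cyclePathIdeal K n m) ^ t) := by
  classical
  haveI : NeZero n := ⟨by omega⟩
  rw [hd] at ht0
  set J := cyclePathIdeal K n m with hJ
  set T : (ZMod n) →₀ ℕ := ∑ a : ZMod n, Finsupp.single a 1 with hT
  -- the witness monomial
  set D : (ZMod n) →₀ ℕ := α • T + (t - t0) • CycleAux.cExp n m 0 with hD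
  set u : MvPolynomial (ZMod n) K := monomial D 1 with hu
  have ht0pos : 0 < t0 := by
    rcases Nat.eq_zero_or_pos t0 with h | h
    · rw [h, mul_zero] at ht0; omega
    · exact h
  have htpos : 0 < t := lt_of_lt_of_le ht0pos ht
  -- generators
  have hgen : ∀ i : ZMod n,
      (∏ j ∈ Finset.range m, (X (i + (j : ZMod n)) : MvPolynomial (ZMod n) K)) ∈ J :=
    fun i => Ideal.subset_span ⟨i, rfl⟩
  have hgen_eq : ∀ i : ZMod n,
      (∏ j ∈ Finset.range m, (X (i + (j : ZMod n)) : MvPolynomial (ZMod n) K))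
        = monomial (CycleAux.cExp n m i) 1 := fun i => CycleAux.prod_X_eq_monomial _ _
  have hgen' : ∀ i : ZMod n, (monomial (CycleAux.cExp n m i) 1 : MvPolynomial (ZMod n) K) ∈ J :=
    fun i => (hgen_eq i) ▸ hgen i
  -- wt of D
  have hwtD : CycleAux.wt n D = m * t - 1 := by
    rw [hD, CycleAux.wt_add, CycleAux.wt_smul, CycleAux.wt_smul, CycleAux.wt_T,
      CycleAux.wt_cExp]
    have : m * t = m * t0 + m * (t - t0) := by
      rw [← Nat.mul_add, Nat.add_sub_cancel' ht]
    have h2 : (t - t0) * m = m * (t - t0) := Nat.mul_comm _ _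
    omega
  -- u ∉ J ^ t
  have hunot : u ∉ J ^ t := by
    intro hmem
    have := CycleAux.pow_le_lowDeg (K := K) n m t htpos hmem
    exact CycleAux.monomial_not_mem_lowDeg n (m * t) D
      (by rw [hwtD]; have : 0 < m * t := Nat.mul_pos (by omega) htpos; omega) this
  -- X i * u ∈ J ^ t
  have hXu : ∀ i : ZMod n, (X i : MvPolynomial (ZMod n) K) * u ∈ J ^ t := by
    intro i
    have hXmono : (X i : MvPolynomial (ZMod n) K) = monomial (Finsupp.single i 1) 1 := by
      rw [← X_pow_eq_monomial, pow_one]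
    have hprod :
        (∏ k ∈ Finset.range t0,
            (monomial (CycleAux.cExp n m (i + ((k * m : ℕ) : ZMod n))) 1 :
              MvPolynomial (ZMod n) K))
          = monomial (Finsupp.single i 1 + α • T) 1 := by
      rw [CycleAux.prod_monomial_one, CycleAux.key n m α t0 ht0 i]
    have hsplit : (X i : MvPolynomial (ZMod n) K) * u
        = (∏ k ∈ Finset.range t0,
            (monomial (CycleAux.cExp n m (i + ((k * m : ℕ) : ZMod n))) 1 :
              MvPolynomial (ZMod n) K))
          * (monomial (CycleAux.cExp n m 0) 1) ^ (t - t0) := by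
      rw [hprod, hXmono, hu, monomial_pow, monomial_mul, monomial_mul]
      rw [hD]
      congr 1
      · abel
      · simp
    rw [hsplit]
    have h1 : (∏ k ∈ Finset.range t0,
        (monomial (CycleAux.cExp n m (i + ((k * m : ℕ) : ZMod n))) 1 :
          MvPolynomial (ZMod n) K)) ∈ J ^ t0 := by
      have := CycleAux.prod_mem_pow (Finset.range t0)
        (fun k => (monomial (CycleAux.cExp n m (i + ((k * m : ℕ) : ZMod n))) 1 :
          MvPolynomial (ZMod n) K)) J (fun k _ => hgen' _)
      simpa using this
    have h2 : ((monomial (CycleAux.cExp n m 0) 1 : MvPolynomial (ZMod n) K)) ^ (t - t0)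
        ∈ J ^ (t - t0) := Ideal.pow_mem_pow (hgen' 0) _
    have := Ideal.mul_mem_mul h1 h2
    rwa [← pow_add, Nat.add_sub_cancel' ht] at this
  -- the class of u
  set xbar : MvPolynomial (ZMod n) K ⧸ J ^ t := Ideal.Quotient.mk (J ^ t) u with hxbar
  have hxne : xbar ≠ 0 := by
    rw [hxbar, Ne, Ideal.Quotient.eq_zero_iff_mem]
    exact hunot
  have hmax : (maxIdeal K (ZMod n)).IsMaximal := CycleAux.maxIdeal_isMaximal (ZMod n)
  have hann : maxIdeal K (ZMod n) = (Submodule.span (MvPolynomial (ZMod n) K) {xbar}).annihilator := by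
    have hle : maxIdeal K (ZMod n) ≤ (Submodule.span (MvPolynomial (ZMod n) K) {xbar}).annihilator := by
      unfold maxIdeal
      refine Ideal.span_le.mpr ?_
      rintro _ ⟨i, rfl⟩
      rw [SetLike.mem_coe, Submodule.mem_annihilator_span_singleton]
      show (Ideal.Quotient.mk (J ^ t)) (X i * u) = 0
      rw [Ideal.Quotient.eq_zero_iff_mem]
      exact hXu i
    have hne : (Submodule.span (MvPolynomial (ZMod n) K) {xbar}).annihilator ≠ ⊤ := by
      intro htop
      have h1 : (1 : MvPolynomial (ZMod n) K) ∈ (Submodule.span (MvPolynomial (ZMod n) K) {xbar}).annihilator := htop ▸ Submodule.mem_top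
      rw [Submodule.mem_annihilator_span_singleton, one_smul] at h1
      exact hxne h1
    exact hmax.eq_of_le hne hle
  have hassoc : maxIdeal K (ZMod n) ∈ associatedPrimes (MvPolynomial (ZMod n) K)
      (MvPolynomial (ZMod n) K ⧸ J ^ t) := ⟨hmax.isPrime, xbar, by
        have hcol : (⊥ : Submodule (MvPolynomial (ZMod n) K) (MvPolynomial (ZMod n) K ⧸ J ^ t)).colon {xbar} = maxIdeal K (ZMod n) := by
          rw [hann]; ext r
          rw [Submodule.mem_colon_singleton, Submodule.mem_bot, Submodule.mem_annihilator_span_singleton]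
        rw [hcol, hmax.isPrime.radical]⟩
  refine ⟨?_, hassoc⟩
  -- depth is zero
  unfold quotDepth
  have hsub : { k : ℕ | ∃ rs : List (MvPolynomial (ZMod n) K), rs.length = k ∧
      (∀ r ∈ rs, r ∈ maxIdeal K (ZMod n)) ∧
      RingTheory.Sequence.IsRegular (MvPolynomial (ZMod n) K ⧸ J ^ t) rs } ⊆ {0} := by
    rintro k ⟨rs, hlen, hmem, hreg⟩
    cases rs with
    | nil => simpa using hlen.symm
    | cons r rs' =>
        exfalso
        have hw := hreg.toIsWeaklyRegular
        rw [RingTheory.Sequence.isWeaklyRegular_cons_iff] at hw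
        have hsreg : IsSMulRegular (MvPolynomial (ZMod n) K ⧸ J ^ t) r := hw.1
        have hr : r ∈ maxIdeal K (ZMod n) := hmem r List.mem_cons_self
        rw [hann, Submodule.mem_annihilator_span_singleton] at hr
        have : xbar = 0 := hsreg (show r • xbar = r • (0 : MvPolynomial (ZMod n) K ⧸ J ^ t) by
          rw [hr, smul_zero])
        exact hxne this
  rcases Set.subset_singleton_iff_eq.mp hsub with h | h
  · rw [h]; exact csSup_empty
  · rw [h]; exact csSup_singleton 0
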